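/- Define the sequence n_i = 2^(2^i) for i ≥ 0 (so n_0 = 2 and n_{i+1} = n_i²), and define the step function f : ℕ → ℝ by f(x) = n_{2i} for n_{2i} ≤ x < n_{2i+1}, f(x) = n_{2i+2} for n_{2i+1} ≤ x < n_{2i+2} (with f(x) = 2 for x < 2, say). Then 𝔦 ⪯₁ f fails: there are no positive integers K, M, N with x ≤ K·f(M·x) for all x ≥ N. -/

import Mathlib

theorem stmt_5 (f : ℕ → ℝ)
    (h0 : ∀ x : ℕ, x < 2 → f x = 2)
    (h1 : ∀ i x : ℕ, 2 ^ 2 ^ (2 * i) ≤ x → x < 2 ^ 2 ^ (2 * i + 1) →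
      f x = ((2 ^ 2 ^ (2 * i) : ℕ) : ℝ))
    (h2 : ∀ i x : ℕ, 2 ^ 2 ^ (2 * i + 1) ≤ x → x < 2 ^ 2 ^ (2 * i + 2) →
      f x = ((2 ^ 2 ^ (2 * i + 2) : ℕ) : ℝ)) :
    ¬ ∃ K M N : ℕ, 0 < K ∧ 0 < M ∧ 0 < N ∧
      ∀ x : ℕ, x ≥ N → (x : ℝ) ≤ (K : ℝ) * f (M * x) := by
  rintro ⟨K, M, N, hK, hM, hN, h⟩
  set i := K + M + N with hi
  have h2i : 2 * i < 2 ^ (2 * i) := Nat.lt_two_pow_self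
  have hpow : 2 ^ (2 * i + 1) = 2 * 2 ^ (2 * i) := by ring
  set e := 2 ^ (2 * i + 1) - 1 - M with he
  have he2 : e + M + 1 = 2 ^ (2 * i + 1) := by omega
  have heB : 2 ^ (2 * i) + K ≤ e := by omega
  set x := 2 ^ e with hx
  have hex : e < x := Nat.lt_two_pow_self
  have hxN : x ≥ N := by omega
  have hlow : 2 ^ 2 ^ (2 * i) ≤ M * x := by
    calc 2 ^ 2 ^ (2 * i) ≤ 2 ^ e := Nat.pow_le_pow_right (by norm_num) (by omega)
      _ ≤ M * x := Nat.le_mul_of_pos_left _ hM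
  have hhigh : M * x < 2 ^ 2 ^ (2 * i + 1) := by
    calc M * x ≤ 2 ^ M * 2 ^ e :=
          Nat.mul_le_mul_right _ (Nat.le_of_lt (Nat.lt_two_pow_self))
      _ = 2 ^ (M + e) := (pow_add 2 M e).symm
      _ < 2 ^ 2 ^ (2 * i + 1) := Nat.pow_lt_pow_right (by norm_num) (by omega)
  have hf : f (M * x) = ((2 ^ 2 ^ (2 * i) : ℕ) : ℝ) := h1 i (M * x) hlow hhigh
  have hnat : K * 2 ^ 2 ^ (2 * i) < x := by
    calc K * 2 ^ 2 ^ (2 * i) < 2 ^ K * 2 ^ 2 ^ (2 * i) :=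
          Nat.mul_lt_mul_of_lt_of_le (Nat.lt_two_pow_self) le_rfl (Nat.pow_pos (by norm_num))
      _ = 2 ^ (K + 2 ^ (2 * i)) := (pow_add 2 K _).symm
      _ ≤ 2 ^ e := Nat.pow_le_pow_right (by norm_num) (by omega)
  have hle := h x hxN
  rw [hf] at hle
  have hR : ((K * 2 ^ 2 ^ (2 * i) : ℕ) : ℝ) < (x : ℝ) := Nat.cast_lt.mpr hnat
  push_cast at hR hle
  linarith
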